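/- Let μ be a finite Borel measure on ℝ^d that is positive on every non-empty open set. Define, for two n-tuples P = (P₁,…,Pₙ) and P′ = (P′₁,…,P′ₙ) of convex n-partitions of ℝ^d, d_μ(P,P′) = Σᵢ μ(Pᵢ △ P′ᵢ), where △ denotes symmetric difference. Then d_μ is a metric on the set of convex n-partitions of ℝ^d; in particular d_μ(P,P′) = 0 implies Pᵢ = P′ᵢ for all i. -/

import Mathlib

open MeasureTheory

/-- A convex `n`-partition of `ℝ^d`: non-empty open convex pairwise disjoint regions whose
closures cover `ℝ^d`. -/
def IsConvexPartition {d n : ℕ} (P : Fin n → Set (EuclideanSpace ℝ (Fin d))) : Prop :=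
  (∀ i, (P i).Nonempty) ∧ (∀ i, IsOpen (P i)) ∧ (∀ i, Convex ℝ (P i)) ∧
    Pairwise (Function.onFun Disjoint P) ∧ (⋃ i, closure (P i)) = Set.univ

/-- For an open convex set `s` with a point `y ∈ s`, `interior (closure s) ⊆ s`. -/
lemma interior_closure_subset_of_convex {d : ℕ} {s : Set (EuclideanSpace ℝ (Fin d))}
    (hc : Convex ℝ s) (ho : IsOpen s) {y : EuclideanSpace ℝ (Fin d)} (hy : y ∈ s) :
    interior (closure s) ⊆ s := by
  intro x hx
  have hy' : y ∈ interior s := by rwa [ho.interior_eq]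
  have hcont : Continuous fun t : ℝ => x + t • (x - y) := by continuity
  have h0 : (fun t : ℝ => x + t • (x - y)) 0 ∈ interior (closure s) := by simpa using hx
  obtain ⟨ε, hε, hball⟩ := Metric.isOpen_iff.mp (isOpen_interior.preimage hcont) 0 h0
  set t : ℝ := ε / 2 with ht_def
  have ht : 0 < t := by positivity
  have htmem : t ∈ Metric.ball (0 : ℝ) ε := by
    simp only [Metric.mem_ball, Real.dist_eq, sub_zero]
    rw [abs_of_pos ht]
    linarith
  have hz : x + t • (x - y) ∈ closure s := interior_subset (hball htmem)
  have hdenom : (1 : ℝ) + t ≠ 0 := by positivity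
  have hxeq : (1 / (1 + t)) • (x + t • (x - y)) + (t / (1 + t)) • y = x := by
    match_scalars <;> field_simp <;> ring
  have : (1 / (1 + t)) • (x + t • (x - y)) + (t / (1 + t)) • y ∈ interior s :=
    hc.combo_closure_interior_mem_interior hz hy' (by positivity) (by positivity)
      (by field_simp)
  rw [hxeq, ho.interior_eq] at this
  exact this

lemma subset_of_diff_null {d : ℕ} (μ : Measure (EuclideanSpace ℝ (Fin d)))
    (hpos : ∀ U : Set (EuclideanSpace ℝ (Fin d)), IsOpen U → U.Nonempty → 0 < μ U)
    {X Y : Set (EuclideanSpace ℝ (Fin d))} (hX : IsOpen X) (hY : IsOpen Y)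
    (hcY : Convex ℝ Y) (hneY : Y.Nonempty) (h0 : μ (X \ Y) = 0) : X ⊆ Y := by
  have hsub : X ⊆ closure Y := by
    by_contra hcon
    obtain ⟨x, hxX, hxC⟩ := Set.not_subset.mp hcon
    have hopen : IsOpen (X \ closure Y) := hX.sdiff isClosed_closure
    have hne : (X \ closure Y).Nonempty := ⟨x, hxX, hxC⟩
    have hle : μ (X \ closure Y) = 0 :=
      measure_mono_null (Set.diff_subset_diff_right subset_closure) h0
    exact absurd hle (hpos _ hopen hne).ne'
  obtain ⟨y, hy⟩ := hneY
  intro x hx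
  exact interior_closure_subset_of_convex hcY hY hy
    (hX.subset_interior_iff.mpr hsub hx)

lemma eq_of_symmDiff_null {d : ℕ} (μ : Measure (EuclideanSpace ℝ (Fin d)))
    (hpos : ∀ U : Set (EuclideanSpace ℝ (Fin d)), IsOpen U → U.Nonempty → 0 < μ U)
    {A B : Set (EuclideanSpace ℝ (Fin d))} (hA : IsOpen A) (hB : IsOpen B)
    (hcA : Convex ℝ A) (hcB : Convex ℝ B) (hneA : A.Nonempty) (hneB : B.Nonempty)
    (h : μ (symmDiff A B) = 0) : A = B := by
  have h1 : μ (A \ B) = 0 := measure_mono_null (by rw [symmDiff_def]; exact le_sup_left) h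
  have h2 : μ (B \ A) = 0 := measure_mono_null (by rw [symmDiff_def]; exact le_sup_right) h
  exact subset_antisymm (subset_of_diff_null μ hpos hA hB hcB hneB h1)
    (subset_of_diff_null μ hpos hB hA hcA hneA h2)

/-- **`d_μ` is a metric on the space of convex `n`-partitions.**  For a finite Borel
measure `μ` positive on non-empty open sets, `d_μ(P,P′) = Σᵢ μ(Pᵢ △ P′ᵢ)` is symmetric,
satisfies the triangle inequality, and vanishes exactly when the partitions coincide. -/
theorem dmu_is_metric
    (d n : ℕ) (μ : Measure (EuclideanSpace ℝ (Fin d))) [IsFiniteMeasure μ]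
    (hpos : ∀ U : Set (EuclideanSpace ℝ (Fin d)), IsOpen U → U.Nonempty → 0 < μ U) :
    ∀ P P' P'' : Fin n → Set (EuclideanSpace ℝ (Fin d)),
      IsConvexPartition P → IsConvexPartition P' → IsConvexPartition P'' →
      ((∑ i, (μ (symmDiff (P i) (P' i))).toReal = 0 ↔ P = P') ∧
       (∑ i, (μ (symmDiff (P i) (P' i))).toReal =
          ∑ i, (μ (symmDiff (P' i) (P i))).toReal) ∧
       (∑ i, (μ (symmDiff (P i) (P'' i))).toReal ≤
          ∑ i, (μ (symmDiff (P i) (P' i))).toReal +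
          ∑ i, (μ (symmDiff (P' i) (P'' i))).toReal)) := by
  intro P P' P'' hP hP' hP''
  obtain ⟨hPne, hPo, hPc, -, -⟩ := hP
  obtain ⟨hP'ne, hP'o, hP'c, -, -⟩ := hP'
  refine ⟨⟨fun h => ?_, fun h => ?_⟩, ?_, ?_⟩
  · -- zero sum implies equal
    have hterm : ∀ i ∈ Finset.univ, (μ (symmDiff (P i) (P' i))).toReal = 0 := by
      rw [← Finset.sum_eq_zero_iff_of_nonneg (fun i _ => ENNReal.toReal_nonneg)]
      exact h
    funext i
    have h0 : μ (symmDiff (P i) (P' i)) = 0 := by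
      have := hterm i (Finset.mem_univ i)
      exact (ENNReal.toReal_eq_zero_iff _).mp this |>.resolve_right (measure_ne_top μ _)
    exact eq_of_symmDiff_null μ hpos (hPo i) (hP'o i) (hPc i) (hP'c i) (hPne i) (hP'ne i) h0
  · subst h; simp
  · simp [symmDiff_comm]
  · rw [← Finset.sum_add_distrib]
    refine Finset.sum_le_sum fun i _ => ?_
    have hle : μ (symmDiff (P i) (P'' i)) ≤
        μ (symmDiff (P i) (P' i)) + μ (symmDiff (P' i) (P'' i)) :=
      (measure_mono (symmDiff_triangle _ _ _)).trans (measure_union_le _ _)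
    calc (μ (symmDiff (P i) (P'' i))).toReal
        ≤ (μ (symmDiff (P i) (P' i)) + μ (symmDiff (P' i) (P'' i))).toReal :=
          ENNReal.toReal_mono (ENNReal.add_ne_top.mpr ⟨measure_ne_top μ _, measure_ne_top μ _⟩) hle
      _ = (μ (symmDiff (P i) (P' i))).toReal + (μ (symmDiff (P' i) (P'' i))).toReal :=
          ENNReal.toReal_add (measure_ne_top μ _) (measure_ne_top μ _)
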